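/- Let (i,k,ℓ) ∈ X_diff and suppose either (a) μ₁ ≥ μ₂, or (b) μ₁ ≤ μ₂ and ℓ ≥ C₂. If h₁/μ₁ ≤ (max(ℓ+1, C₂)/C₂)·(h₂/μ₂), then D(i,k,ℓ) ≤ 0 (this holds for every i ≥ 0 with (i,k,ℓ) ∈ X_diff). -/

import Mathlib

set_option maxHeartbeats 1000000


/-- Overall service rate `d(k,ℓ) = k·μ₁ + min(ℓ,C₂)·μ₂`. -/
noncomputable def dRate (C₂ : ℕ) (μ₁ μ₂ : ℝ) (k ℓ : ℕ) : ℝ :=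
  (k : ℝ) * μ₁ + ((min ℓ C₂ : ℕ) : ℝ) * μ₂

/-- Membership of `(i,k,ℓ)` in the state space `X`. -/
def memX (C₁ : ℕ) (i k ℓ : ℕ) : Prop :=
  (i = 0 ∧ k + ℓ < C₁) ∨ k + ℓ = C₁

/-- `v` satisfies the optimality (Bellman) equations of the clearing system.
Terms whose coefficient `k·μ₁` or `min(ℓ,C₂)·μ₂` vanishes contribute `0`,
matching the convention that such summands are omitted. -/
def IsValue (C₁ C₂ : ℕ) (μ₁ μ₂ h₀ h₁ h₂ : ℝ) (v : ℕ → ℕ → ℕ → ℝ) : Prop :=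
  v 0 0 0 = 0 ∧
  (∀ k ℓ : ℕ, k + ℓ ≤ C₁ → ¬(k = 0 ∧ ℓ = 0) →
    v 0 k ℓ = ((k : ℝ) * h₁ + (ℓ : ℝ) * h₂) / dRate C₂ μ₁ μ₂ k ℓ
      + ((k : ℝ) * μ₁ / dRate C₂ μ₁ μ₂ k ℓ) * v 0 (k - 1) ℓ
      + (((min ℓ C₂ : ℕ) : ℝ) * μ₂ / dRate C₂ μ₁ μ₂ k ℓ) * v 0 k (ℓ - 1)) ∧
  (∀ i k ℓ : ℕ, k + ℓ = C₁ →
    v (i + 1) k ℓ =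
      (((i : ℝ) + 1) * h₀ + (k : ℝ) * h₁ + (ℓ : ℝ) * h₂) / dRate C₂ μ₁ μ₂ k ℓ
      + ((k : ℝ) * μ₁ / dRate C₂ μ₁ μ₂ k ℓ) *
          min (v i k ℓ) (v i (k - 1) (ℓ + 1))
      + (((min ℓ C₂ : ℕ) : ℝ) * μ₂ / dRate C₂ μ₁ μ₂ k ℓ) *
          min (v i (k + 1) (ℓ - 1)) (v i k ℓ))

/-- The difference `D(i,k,ℓ) = v(i,k,ℓ) − v(i,k−1,ℓ+1)`. -/
noncomputable def Dv (v : ℕ → ℕ → ℕ → ℝ) (i k ℓ : ℕ) : ℝ :=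
  v i k ℓ - v i (k - 1) (ℓ + 1)

noncomputable def gfun (C₂ : ℕ) (μ₂ h₂ : ℝ) : ℕ → ℝ
  | 0 => 0
  | ℓ + 1 => gfun C₂ μ₂ h₂ ℓ + (((ℓ : ℝ) + 1) * h₂) / (((min (ℓ + 1) C₂ : ℕ) : ℝ) * μ₂)

lemma v0_closed (C₁ C₂ : ℕ) (hC₂ : 1 ≤ C₂) (μ₁ μ₂ h₀ h₁ h₂ : ℝ)
    (hμ₁ : 0 < μ₁) (hμ₂ : 0 < μ₂)
    (v : ℕ → ℕ → ℕ → ℝ) (hv : IsValue C₁ C₂ μ₁ μ₂ h₀ h₁ h₂ v) :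
    ∀ n k ℓ, k + ℓ = n → k + ℓ ≤ C₁ →
      v 0 k ℓ = (k : ℝ) * h₁ / μ₁ + gfun C₂ μ₂ h₂ ℓ := by
  intro n
  induction n using Nat.strong_induction_on with
  | _ n ih =>
    intro k ℓ hn hle
    match k, ℓ with
    | 0, 0 => simp [hv.1, gfun]
    | 0, ℓ + 1 =>
      have hM : 1 ≤ min (ℓ + 1) C₂ := by omega
      have hMr : (1:ℝ) ≤ ((min (ℓ + 1) C₂ : ℕ) : ℝ) := by exact_mod_cast hM
      have hd : dRate C₂ μ₁ μ₂ 0 (ℓ+1) = ((min (ℓ + 1) C₂ : ℕ) : ℝ) * μ₂ := by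
        simp [dRate]
      have heq := hv.2.1 0 (ℓ+1) hle (by simp)
      have hih := ih ℓ (by omega) 0 ℓ (by omega) (by omega)
      rw [heq, hd]
      simp only [Nat.add_sub_cancel]
      rw [hih]
      simp only [gfun]
      push_cast
      field_simp
      ring
    | k + 1, 0 =>
      have hd : dRate C₂ μ₁ μ₂ (k+1) 0 = ((k:ℝ)+1) * μ₁ := by
        simp [dRate]
      have heq := hv.2.1 (k+1) 0 hle (by simp)
      have hih := ih (k + 0) (by omega) k 0 rfl (by omega)
      rw [heq, hd]
      simp only [Nat.add_sub_cancel]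
      rw [hih]
      simp only [gfun, Nat.min_zero, Nat.zero_min, Nat.cast_zero]
      push_cast
      have : ((k:ℝ)+1) * μ₁ ≠ 0 := by positivity
      field_simp
      ring
    | k + 1, ℓ + 1 =>
      have hM : 1 ≤ min (ℓ + 1) C₂ := by omega
      have hMr : (1:ℝ) ≤ ((min (ℓ + 1) C₂ : ℕ) : ℝ) := by exact_mod_cast hM
      have hMpos : (0:ℝ) < ((min (ℓ + 1) C₂ : ℕ) : ℝ) := by linarith
      have hd : dRate C₂ μ₁ μ₂ (k+1) (ℓ+1)
          = ((k+1 : ℕ) : ℝ) * μ₁ + ((min (ℓ + 1) C₂ : ℕ) : ℝ) * μ₂ := rfl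
      have hdpos : 0 < ((k+1 : ℕ) : ℝ) * μ₁ + ((min (ℓ + 1) C₂ : ℕ) : ℝ) * μ₂ := by
        positivity
      have heq := hv.2.1 (k+1) (ℓ+1) hle (by simp)
      have hih1 := ih (k + (ℓ+1)) (by omega) k (ℓ+1) rfl (by omega)
      have hih2 := ih ((k+1) + ℓ) (by omega) (k+1) ℓ rfl (by omega)
      rw [heq, hd]
      simp only [Nat.add_sub_cancel]
      rw [hih1, hih2]
      simp only [gfun]
      push_cast [-Nat.cast_min]
      field_simp
      ring

lemma cost_div (C₂ : ℕ) (hC₂ : 1 ≤ C₂) (μ₁ μ₂ h₁ h₂ : ℝ)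
    (hμ₁ : 0 < μ₁) (hμ₂ : 0 < μ₂) (hh₂ : 0 < h₂) (ℓ : ℕ)
    (hcost : h₁ / μ₁ ≤ ((max (ℓ + 1) C₂ : ℕ) : ℝ) / (C₂ : ℝ) * (h₂ / μ₂)) :
    h₁ / μ₁ ≤ ((ℓ : ℝ) + 1) * h₂ / (((min (ℓ + 1) C₂ : ℕ) : ℝ) * μ₂) := by
  have hC₂r : (0:ℝ) < (C₂ : ℝ) := by exact_mod_cast hC₂
  have hMr : (0:ℝ) < ((min (ℓ + 1) C₂ : ℕ) : ℝ) := by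
    have : 1 ≤ min (ℓ + 1) C₂ := by omega
    exact_mod_cast this
  have key : ((min (ℓ+1) C₂ : ℕ) : ℝ) * ((max (ℓ+1) C₂ : ℕ) : ℝ)
      = ((ℓ:ℝ) + 1) * (C₂ : ℝ) := by
    have h := min_mul_max (ℓ+1) C₂
    exact_mod_cast congrArg (fun n : ℕ => (n:ℝ)) h
  have heq : ((max (ℓ + 1) C₂ : ℕ) : ℝ) / (C₂ : ℝ) * (h₂ / μ₂)
      = ((ℓ : ℝ) + 1) * h₂ / (((min (ℓ + 1) C₂ : ℕ) : ℝ) * μ₂) := by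
    rw [div_mul_div_comm, div_eq_div_iff (by positivity) (by positivity)]
    linear_combination h₂ * μ₂ * key
  linarith [hcost, heq.le, heq.ge]

lemma Dv_zero (C₁ C₂ : ℕ) (hC₂ : 1 ≤ C₂) (μ₁ μ₂ h₀ h₁ h₂ : ℝ)
    (hμ₁ : 0 < μ₁) (hμ₂ : 0 < μ₂) (hh₂ : 0 < h₂)
    (v : ℕ → ℕ → ℕ → ℝ) (hv : IsValue C₁ C₂ μ₁ μ₂ h₀ h₁ h₂ v)
    (k ℓ : ℕ) (hk : 1 ≤ k) (hle : k + ℓ ≤ C₁)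
    (hcost : h₁ / μ₁ ≤ ((max (ℓ + 1) C₂ : ℕ) : ℝ) / (C₂ : ℝ) * (h₂ / μ₂)) :
    Dv v 0 k ℓ ≤ 0 := by
  obtain ⟨k', rfl⟩ : ∃ k', k = k' + 1 := ⟨k - 1, by omega⟩
  have h1 := v0_closed C₁ C₂ hC₂ μ₁ μ₂ h₀ h₁ h₂ hμ₁ hμ₂ v hv (k' + 1 + ℓ)
    (k' + 1) ℓ rfl hle
  have h2 := v0_closed C₁ C₂ hC₂ μ₁ μ₂ h₀ h₁ h₂ hμ₁ hμ₂ v hv (k' + (ℓ + 1))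
    k' (ℓ + 1) rfl (by omega)
  have hc := cost_div C₂ hC₂ μ₁ μ₂ h₁ h₂ hμ₁ hμ₂ hh₂ ℓ hcost
  unfold Dv
  simp only [Nat.add_sub_cancel]
  rw [h1, h2]
  simp only [gfun]
  push_cast [-Nat.cast_min]
  have : ((k':ℝ) + 1) * h₁ / μ₁ = (k':ℝ) * h₁ / μ₁ + h₁ / μ₁ := by ring
  linarith [hc, this.le, this.ge]

lemma cost_mono (C₂ : ℕ) (hC₂ : 1 ≤ C₂) (μ₁ μ₂ h₁ h₂ : ℝ)
    (hμ₁ : 0 < μ₁) (hμ₂ : 0 < μ₂) (hh₂ : 0 < h₂) (ℓ : ℕ)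
    (hcost : h₁ / μ₁ ≤ ((max (ℓ + 1) C₂ : ℕ) : ℝ) / (C₂ : ℝ) * (h₂ / μ₂)) :
    h₁ / μ₁ ≤ ((max (ℓ + 1 + 1) C₂ : ℕ) : ℝ) / (C₂ : ℝ) * (h₂ / μ₂) := by
  refine le_trans hcost ?_
  have hC₂r : (0:ℝ) < (C₂ : ℝ) := by exact_mod_cast hC₂
  have hmax : ((max (ℓ + 1) C₂ : ℕ) : ℝ) ≤ ((max (ℓ + 1 + 1) C₂ : ℕ) : ℝ) := by
    exact_mod_cast max_le_max (Nat.le_succ _) (le_refl C₂)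
  gcongr

/-- cross-multiplied cost-rate comparison: c·d' ≤ c'·d -/
lemma cd_ineq (C₂ : ℕ) (hC₂ : 1 ≤ C₂) (μ₁ μ₂ h₀ h₁ h₂ : ℝ)
    (hμ₁ : 0 < μ₁) (hμ₂ : 0 < μ₂) (hh₀ : 0 < h₀) (hh₁ : 0 < h₁) (hh₂ : 0 < h₂)
    (i k' ℓ : ℕ)
    (hcase : μ₂ ≤ μ₁ ∨ (μ₁ ≤ μ₂ ∧ C₂ ≤ ℓ))
    (hcost : h₁ / μ₁ ≤ ((max (ℓ + 1) C₂ : ℕ) : ℝ) / (C₂ : ℝ) * (h₂ / μ₂)) :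
    (((i:ℝ) + 1) * h₀ + ((k':ℝ) + 1) * h₁ + (ℓ:ℝ) * h₂)
      * ((k':ℝ) * μ₁ + ((min (ℓ + 1) C₂ : ℕ) : ℝ) * μ₂)
    ≤ (((i:ℝ) + 1) * h₀ + (k':ℝ) * h₁ + ((ℓ:ℝ) + 1) * h₂)
      * (((k':ℝ) + 1) * μ₁ + ((min ℓ C₂ : ℕ) : ℝ) * μ₂) := by
  have hC₂r : (0:ℝ) < (C₂ : ℝ) := by exact_mod_cast hC₂
  have hk0 : (0:ℝ) ≤ (k':ℝ) := Nat.cast_nonneg _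
  have hl0 : (0:ℝ) ≤ (ℓ:ℝ) := Nat.cast_nonneg _
  have hi0 : (0:ℝ) ≤ (i:ℝ) := Nat.cast_nonneg _
  -- polynomial form of the cost hypothesis
  have hcost' : h₁ * ((C₂:ℝ) * μ₂) ≤ ((max (ℓ + 1) C₂ : ℕ) : ℝ) * h₂ * μ₁ := by
    rw [div_mul_div_comm, div_le_div_iff₀ hμ₁ (by positivity)] at hcost
    linarith [hcost]
  rcases le_or_gt C₂ ℓ with hcl | hcl
  · -- here min ℓ C₂ = C₂ = min (ℓ+1) C₂ and max (ℓ+1) C₂ = ℓ+1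
    have e1 : min ℓ C₂ = C₂ := by omega
    have e2 : min (ℓ + 1) C₂ = C₂ := by omega
    have e3 : max (ℓ + 1) C₂ = ℓ + 1 := by omega
    rw [e1, e2]
    rw [e3] at hcost'
    push_cast at hcost' ⊢
    nlinarith [mul_pos hh₀ hμ₁, mul_nonneg (mul_nonneg hi0 hh₀.le) hμ₁.le,
      mul_nonneg (mul_nonneg hk0 hh₂.le) hμ₁.le, mul_pos hh₂ hμ₁,
      mul_pos (mul_pos hC₂r hh₂) hμ₂]
  · -- ℓ < C₂ : min ℓ C₂ = ℓ, min (ℓ+1) C₂ = ℓ+1, max (ℓ+1) C₂ = C₂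
    have hμ : μ₂ ≤ μ₁ := by
      rcases hcase with h | ⟨_, h⟩
      · exact h
      · omega
    have e1 : min ℓ C₂ = ℓ := by omega
    have e2 : min (ℓ + 1) C₂ = ℓ + 1 := by omega
    have e3 : max (ℓ + 1) C₂ = C₂ := by omega
    rw [e1, e2]
    rw [e3] at hcost'
    -- hcost' : h₁ * (C₂ μ₂) ≤ C₂ h₂ μ₁, so h₁ μ₂ ≤ h₂ μ₁
    have hkey : h₁ * μ₂ ≤ h₂ * μ₁ := by nlinarith [hC₂r]
    push_cast
    nlinarith [mul_nonneg (mul_nonneg hi0 hh₀.le) (sub_nonneg.mpr hμ),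
      mul_nonneg hh₀.le (sub_nonneg.mpr hμ),
      mul_nonneg (add_nonneg (add_nonneg hk0 hl0) zero_le_one)
        (sub_nonneg.mpr hkey)]

lemma step (C₁ C₂ : ℕ) (hC₂ : 1 ≤ C₂) (μ₁ μ₂ h₀ h₁ h₂ : ℝ)
    (hμ₁ : 0 < μ₁) (hμ₂ : 0 < μ₂) (hh₀ : 0 < h₀) (hh₁ : 0 < h₁) (hh₂ : 0 < h₂)
    (v : ℕ → ℕ → ℕ → ℝ) (hv : IsValue C₁ C₂ μ₁ μ₂ h₀ h₁ h₂ v) (i : ℕ)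
    (IH : ∀ k ℓ, k + ℓ = C₁ → 1 ≤ k → (μ₂ ≤ μ₁ ∨ (μ₁ ≤ μ₂ ∧ C₂ ≤ ℓ)) →
      h₁ / μ₁ ≤ ((max (ℓ + 1) C₂ : ℕ) : ℝ) / (C₂ : ℝ) * (h₂ / μ₂) →
      Dv v i k ℓ ≤ 0)
    (k ℓ : ℕ) (hsum : k + ℓ = C₁) (hk : 1 ≤ k)
    (hcase : μ₂ ≤ μ₁ ∨ (μ₁ ≤ μ₂ ∧ C₂ ≤ ℓ))
    (hcost : h₁ / μ₁ ≤ ((max (ℓ + 1) C₂ : ℕ) : ℝ) / (C₂ : ℝ) * (h₂ / μ₂)) :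
    Dv v (i + 1) k ℓ ≤ 0 := by
  obtain ⟨k', rfl⟩ : ∃ k', k = k' + 1 := ⟨k - 1, by omega⟩
  have hC₂r : (0:ℝ) < (C₂ : ℝ) := by exact_mod_cast hC₂
  have hM0 : (0:ℝ) ≤ ((min ℓ C₂ : ℕ) : ℝ) := Nat.cast_nonneg _
  have hM'1 : (1:ℝ) ≤ ((min (ℓ + 1) C₂ : ℕ) : ℝ) := by
    have : 1 ≤ min (ℓ + 1) C₂ := by omega
    exact_mod_cast this
  have hk0 : (0:ℝ) ≤ (k':ℝ) := Nat.cast_nonneg _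
  set V : ℝ := v i (k' + 1) ℓ with hV
  set V' : ℝ := v i k' (ℓ + 1) with hV'
  -- the inductive hypothesis at (k'+1, ℓ)
  have hVV' : V ≤ V' := by
    have h := IH (k' + 1) ℓ hsum (by omega) hcase hcost
    unfold Dv at h
    simp only [Nat.add_sub_cancel] at h
    linarith
  -- Bellman equations
  have E1 := hv.2.2 i (k' + 1) ℓ hsum
  have E2 := hv.2.2 i k' (ℓ + 1) (by omega)
  simp only [Nat.add_sub_cancel, dRate] at E1 E2
  rw [← hV, ← hV', min_eq_left hVV'] at E1 E2
  set D : ℝ := ((k' + 1 : ℕ):ℝ) * μ₁ + ((min ℓ C₂ : ℕ) : ℝ) * μ₂ with hD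
  set D' : ℝ := (k' : ℝ) * μ₁ + ((min (ℓ + 1) C₂ : ℕ) : ℝ) * μ₂ with hD'
  have hk1 : (0:ℝ) < ((k' + 1 : ℕ):ℝ) := by exact_mod_cast Nat.succ_pos k'
  have hDpos : 0 < D := by
    have := mul_pos hk1 hμ₁
    nlinarith [mul_nonneg hM0 hμ₂.le]
  have hD'pos : 0 < D' := by
    nlinarith [mul_nonneg hk0 hμ₁.le, mul_pos (lt_of_lt_of_le one_pos hM'1) hμ₂]
  set c : ℝ := ((i:ℝ) + 1) * h₀ + ((k' + 1 : ℕ):ℝ) * h₁ + (ℓ:ℝ) * h₂ with hc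
  set c' : ℝ := ((i:ℝ) + 1) * h₀ + (k':ℝ) * h₁ + ((ℓ:ℝ) + 1) * h₂ with hc'
  -- upper bound for v (i+1) (k'+1) ℓ
  have hub : v (i + 1) (k' + 1) ℓ ≤ c / D + V := by
    rw [E1]
    have hB : min (v i (k' + 1 + 1) (ℓ - 1)) V ≤ V := min_le_right _ _
    have h1 : ((min ℓ C₂ : ℕ) : ℝ) * μ₂ / D * min (v i (k' + 1 + 1) (ℓ - 1)) V
        ≤ ((min ℓ C₂ : ℕ) : ℝ) * μ₂ / D * V := by
      apply mul_le_mul_of_nonneg_left hB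
      positivity
    have h2 : ((k' + 1 : ℕ):ℝ) * μ₁ / D * V + ((min ℓ C₂ : ℕ) : ℝ) * μ₂ / D * V
        = V := by
      have hsumD : ((k' + 1 : ℕ):ℝ) * μ₁ / D + ((min ℓ C₂ : ℕ) : ℝ) * μ₂ / D = 1 := by
        rw [← add_div, ← hD, div_self (ne_of_gt hDpos)]
      calc ((k' + 1 : ℕ):ℝ) * μ₁ / D * V + ((min ℓ C₂ : ℕ) : ℝ) * μ₂ / D * V
          = (((k' + 1 : ℕ):ℝ) * μ₁ / D + ((min ℓ C₂ : ℕ) : ℝ) * μ₂ / D) * V := by ring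
        _ = V := by rw [hsumD, one_mul]
    linarith
  -- lower bound for v (i+1) k' (ℓ+1)
  have hlb : c' / D' + V ≤ v (i + 1) k' (ℓ + 1) := by
    rw [E2]
    push_cast [-Nat.cast_min]
    have h3 : (k':ℝ) * μ₁ / D' * V
        ≤ (k':ℝ) * μ₁ / D' * min V' (v i (k' - 1) (ℓ + 1 + 1)) := by
      rcases Nat.eq_zero_or_pos k' with hz | hpos
      · subst hz; simp
      · have hU : V' ≤ v i (k' - 1) (ℓ + 1 + 1) := by
          have h := IH k' (ℓ + 1) (by omega) hpos
            (by rcases hcase with h | ⟨h1, h2⟩; exact Or.inl h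
                exact Or.inr ⟨h1, by omega⟩)
            (cost_mono C₂ hC₂ μ₁ μ₂ h₁ h₂ hμ₁ hμ₂ hh₂ ℓ hcost)
          unfold Dv at h
          linarith
        rw [min_eq_left hU]
        exact mul_le_mul_of_nonneg_left hVV' (by positivity)
    have h4 : (k':ℝ) * μ₁ / D' * V + ((min (ℓ + 1) C₂ : ℕ) : ℝ) * μ₂ / D' * V
        = V := by
      have hsumD : (k':ℝ) * μ₁ / D' + ((min (ℓ + 1) C₂ : ℕ) : ℝ) * μ₂ / D' = 1 := by
        rw [← add_div, ← hD', div_self (ne_of_gt hD'pos)]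
      calc (k':ℝ) * μ₁ / D' * V + ((min (ℓ + 1) C₂ : ℕ) : ℝ) * μ₂ / D' * V
          = ((k':ℝ) * μ₁ / D' + ((min (ℓ + 1) C₂ : ℕ) : ℝ) * μ₂ / D') * V := by ring
        _ = V := by rw [hsumD, one_mul]
    linarith
  -- the cost/rate comparison
  have hcd : c / D ≤ c' / D' := by
    rw [div_le_div_iff₀ hDpos hD'pos, hc, hc', hD, hD']
    have := cd_ineq C₂ hC₂ μ₁ μ₂ h₀ h₁ h₂ hμ₁ hμ₂ hh₀ hh₁ hh₂ i k' ℓ hcase hcost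
    push_cast [-Nat.cast_min] at this ⊢
    linarith
  unfold Dv
  simp only [Nat.add_sub_cancel]
  linarith
theorem stmt6
    (C₁ C₂ : ℕ) (hC₂pos : 1 ≤ C₂) (hC : C₂ < C₁)
    (μ₁ μ₂ h₀ h₁ h₂ : ℝ)
    (hμ₁ : 0 < μ₁) (hμ₂ : 0 < μ₂)
    (hh₀ : 0 < h₀) (hh₁ : 0 < h₁) (hh₂ : 0 < h₂)
    (v : ℕ → ℕ → ℕ → ℝ) (hv : IsValue C₁ C₂ μ₁ μ₂ h₀ h₁ h₂ v)
    (i k ℓ : ℕ) (hx : memX C₁ i k ℓ) (hk : 1 ≤ k)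
    (hcase : μ₂ ≤ μ₁ ∨ (μ₁ ≤ μ₂ ∧ C₂ ≤ ℓ))
    (hcost : h₁ / μ₁ ≤ ((max (ℓ + 1) C₂ : ℕ) : ℝ) / (C₂ : ℝ) * (h₂ / μ₂)) :
    Dv v i k ℓ ≤ 0 := by
  have main : ∀ j k ℓ, k + ℓ = C₁ → 1 ≤ k →
      (μ₂ ≤ μ₁ ∨ (μ₁ ≤ μ₂ ∧ C₂ ≤ ℓ)) →
      h₁ / μ₁ ≤ ((max (ℓ + 1) C₂ : ℕ) : ℝ) / (C₂ : ℝ) * (h₂ / μ₂) →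
      Dv v j k ℓ ≤ 0 := by
    intro j
    induction j with
    | zero =>
      intro k ℓ hs hk' _ hco
      exact Dv_zero C₁ C₂ hC₂pos μ₁ μ₂ h₀ h₁ h₂ hμ₁ hμ₂ hh₂ v hv k ℓ hk'
        (le_of_eq hs) hco
    | succ j ih =>
      intro k ℓ hs hk' hca hco
      exact step C₁ C₂ hC₂pos μ₁ μ₂ h₀ h₁ h₂ hμ₁ hμ₂ hh₀ hh₁ hh₂ v hv j ih
        k ℓ hs hk' hca hco
  rcases hx with ⟨hi0, hlt⟩ | hsum
  · subst hi0
    exact Dv_zero C₁ C₂ hC₂pos μ₁ μ₂ h₀ h₁ h₂ hμ₁ hμ₂ hh₂ v hv k ℓ hk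
      (le_of_lt hlt) hcost
  · exact main i k ℓ hsum hk hcase hcost
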